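/- arXiv:1006.4273 — 6 statements merged into one kernel-verified Lean document; each statement's English description precedes it below -/
import Mathlib

section
/- Let n ≥ 1, let φ ∈ ℝⁿ be nonzero, let C be a symmetric n×n real matrix, and let B be an n×(n−1) real matrix with Bᵀ B = I_{n−1} and Bᵀ φ = 0 (so the columns of B form an orthonormal basis of the hyperplane φ⊥ = {x ∈ ℝⁿ : φᵀ x = 0}). Assume that the (n−1)×(n−1) matrix Bᵀ C B is invertible (i.e., the bilinear form defined by C is nondegenerate on φ⊥). Then det [[0, φᵀ],[φ, C]] = −(φᵀ φ) · det(Bᵀ C B). -/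
open Matrix

private def e2 : Fin 2 ≃ Fin 1 ⊕ Fin 1 where
  toFun := ![Sum.inl 0, Sum.inr 0]
  invFun := Sum.elim (fun _ => 0) (fun _ => 1)
  left_inv := by decide
  right_inv := by decide

private lemma det_blocks11 (A B C D : Matrix (Fin 1) (Fin 1) ℝ) :
    (fromBlocks A B C D).det = A 0 0 * D 0 0 - B 0 0 * C 0 0 := by
  rw [← det_submatrix_equiv_self e2, det_fin_two]
  simp [e2, fromBlocks]

theorem stmt_1 (n : ℕ) (hn : 1 ≤ n) (φ : Fin n → ℝ) (hφ : φ ≠ 0)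
    (C : Matrix (Fin n) (Fin n) ℝ) (hsymm : C.IsSymm)
    (B : Matrix (Fin n) (Fin (n - 1)) ℝ)
    (hB_orth : Bᵀ * B = 1) (hB_perp : Bᵀ *ᵥ φ = 0)
    (hinv : IsUnit (Bᵀ * C * B).det) :
    (Matrix.fromBlocks (0 : Matrix (Fin 1) (Fin 1) ℝ)
        (Matrix.replicateRow (Fin 1) φ) (Matrix.replicateCol (Fin 1) φ) C).det
      = -((φ ⬝ᵥ φ) * (Bᵀ * C * B).det) := by
  classical
  set s : ℝ := φ ⬝ᵥ φ with hs
  have hs0 : s ≠ 0 := fun h => hφ (dotProduct_self_eq_zero.mp h)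
  set M : Matrix (Fin 1 ⊕ Fin n) (Fin 1 ⊕ Fin n) ℝ :=
    fromBlocks 0 (replicateRow (Fin 1) φ) (replicateCol (Fin 1) φ) C with hM
  set D : Matrix (Fin (n-1)) (Fin (n-1)) ℝ := Bᵀ * C * B with hD
  haveI : Invertible D := D.invertibleOfIsUnitDet hinv
  -- basic entry facts
  have h1 : replicateRow (Fin 1) φ * replicateCol (Fin 1) φ = s • (1 : Matrix (Fin 1) (Fin 1) ℝ) := by
    ext i j
    simp [mul_apply, dotProduct, Subsingleton.elim i j, Matrix.one_apply, hs]
  have h2 : replicateRow (Fin 1) φ * B = 0 := by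
    ext i j
    have := congrFun hB_perp j
    simpa [mul_apply, Matrix.mulVec, dotProduct, mul_comm] using this
  have h3 : Bᵀ * replicateCol (Fin 1) φ = 0 := by
    ext j i
    have := congrFun hB_perp j
    simpa [mul_apply, Matrix.mulVec, dotProduct] using this
  -- congruence matrix
  set R₁ : Matrix (Fin 1 ⊕ Fin n) (Fin 1 ⊕ Fin 1) ℝ :=
    fromBlocks 1 0 0 (replicateCol (Fin 1) φ) with hR₁
  set R₂ : Matrix (Fin 1 ⊕ Fin n) (Fin (n-1)) ℝ := fromRows 0 B with hR₂
  set R : Matrix (Fin 1 ⊕ Fin n) ((Fin 1 ⊕ Fin 1) ⊕ Fin (n-1)) ℝ :=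
    fromCols R₁ R₂ with hR
  have hRT : Rᵀ = fromRows R₁ᵀ R₂ᵀ := transpose_fromCols R₁ R₂
  have hR₁T : R₁ᵀ = fromBlocks 1 0 0 (replicateRow (Fin 1) φ) := by
    simp [hR₁, fromBlocks_transpose]
  have hR₂T : R₂ᵀ = fromCols 0 Bᵀ := by
    simp [hR₂, transpose_fromRows]
  -- M * R pieces
  have hMR₁ : M * R₁ = fromBlocks 0 (s • 1) (replicateCol (Fin 1) φ) (C * replicateCol (Fin 1) φ) := by
    rw [hM, hR₁, fromBlocks_multiply]
    simp [h1]
  have hMR₂ : M * R₂ = fromRows 0 (C * B) := by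
    rw [hM, hR₂, fromBlocks_mul_fromRows]
    simp [h2]
  -- the blocks of Rᵀ M R
  have hE : R₁ᵀ * (M * R₁) = fromBlocks 0 (s • 1) (s • 1)
      (replicateRow (Fin 1) φ * (C * replicateCol (Fin 1) φ)) := by
    rw [hMR₁, hR₁T, fromBlocks_multiply]
    simp [h1]
  have hF : R₁ᵀ * (M * R₂) = fromRows 0 (replicateRow (Fin 1) φ * (C * B)) := by
    rw [hMR₂, hR₁T, fromBlocks_mul_fromRows]
    simp
  have hG : R₂ᵀ * (M * R₁) = fromCols 0 (Bᵀ * (C * replicateCol (Fin 1) φ)) := by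
    rw [hMR₁, hR₂T, fromCols_mul_fromBlocks]
    simp [h3]
  have hDblock : R₂ᵀ * (M * R₂) = D := by
    rw [hMR₂, hR₂T, fromCols_mul_fromRows]
    simp [hD, Matrix.mul_assoc]
  have hRMR : Rᵀ * M * R = fromBlocks
      (fromBlocks 0 (s • 1) (s • 1) (replicateRow (Fin 1) φ * (C * replicateCol (Fin 1) φ)))
      (fromRows 0 (replicateRow (Fin 1) φ * (C * B)))
      (fromCols 0 (Bᵀ * (C * replicateCol (Fin 1) φ))) D := by
    rw [Matrix.mul_assoc, hRT, hR, mul_fromCols, fromRows_mul_fromCols,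
      hE, hF, hG, hDblock]
  -- Rᵀ R
  have hRR : Rᵀ * R = fromBlocks (fromBlocks 1 0 0 (s • 1)) 0 0 1 := by
    rw [hRT, hR, fromRows_mul_fromCols]
    have e11 : R₁ᵀ * R₁ = fromBlocks 1 0 0 (s • 1) := by
      rw [hR₁T, hR₁, fromBlocks_multiply]; simp [h1]
    have e12 : R₁ᵀ * R₂ = 0 := by
      rw [hR₁T, hR₂, fromBlocks_mul_fromRows]; simp [h2]
    have e21 : R₂ᵀ * R₁ = 0 := by
      rw [hR₂T, hR₁, fromCols_mul_fromBlocks]; simp [h3]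
    have e22 : R₂ᵀ * R₂ = 1 := by
      rw [hR₂T, hR₂, fromCols_mul_fromRows]; simp [hB_orth]
    rw [e11, e12, e21, e22]
  -- determinant of Rᵀ M R via Schur complement
  have hdet1 : (Rᵀ * M * R).det = -(s * s) * D.det := by
    rw [hRMR, det_fromBlocks₂₂, Matrix.invOf_eq_nonsing_inv]
    have hFD : fromRows (0 : Matrix (Fin 1) (Fin (n-1)) ℝ) (replicateRow (Fin 1) φ * (C * B)) * D⁻¹ *
        fromCols (0 : Matrix (Fin (n-1)) (Fin 1) ℝ) (Bᵀ * (C * replicateCol (Fin 1) φ)) =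
        fromBlocks (0 : Matrix (Fin 1) (Fin 1) ℝ) (0 : Matrix (Fin 1) (Fin 1) ℝ)
          (0 : Matrix (Fin 1) (Fin 1) ℝ)
          (replicateRow (Fin 1) φ * (C * B) * D⁻¹ * (Bᵀ * (C * replicateCol (Fin 1) φ))) := by
      rw [fromRows_mul, fromRows_mul_fromCols]
      simp
    rw [hFD]
    have : (fromBlocks 0 (s • 1) (s • 1) (replicateRow (Fin 1) φ * (C * replicateCol (Fin 1) φ)) -
        fromBlocks (0 : Matrix (Fin 1) (Fin 1) ℝ) (0 : Matrix (Fin 1) (Fin 1) ℝ)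
          (0 : Matrix (Fin 1) (Fin 1) ℝ)
          (replicateRow (Fin 1) φ * (C * B) * D⁻¹ * (Bᵀ * (C * replicateCol (Fin 1) φ)))) =
        fromBlocks 0 (s • 1) (s • 1) (replicateRow (Fin 1) φ * (C * replicateCol (Fin 1) φ) -
          replicateRow (Fin 1) φ * (C * B) * D⁻¹ * (Bᵀ * (C * replicateCol (Fin 1) φ))) := by
      ext (i|i) (j|j) <;> simp [fromBlocks]
    rw [this, det_blocks11]
    simp [Matrix.smul_apply, Matrix.one_apply]
    ring
  -- determinant of Rᵀ R
  have hdet2 : (Rᵀ * R).det = s := by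
    rw [hRR, det_fromBlocks_zero₂₁, det_fromBlocks_zero₂₁]
    simp
  -- reindex R to a square matrix
  have hne : n = 1 + (n - 1) := by omega
  let ε : (Fin 1 ⊕ Fin n) ≃ ((Fin 1 ⊕ Fin 1) ⊕ Fin (n-1)) :=
    ((Equiv.refl (Fin 1)).sumCongr ((finCongr hne).trans finSumFinEquiv.symm)).trans
      (Equiv.sumAssoc (Fin 1) (Fin 1) (Fin (n-1))).symm
  set R' : Matrix (Fin 1 ⊕ Fin n) (Fin 1 ⊕ Fin n) ℝ := R.submatrix id ε with hR'
  have hsub : ∀ X : Matrix (Fin 1 ⊕ Fin n) (Fin 1 ⊕ Fin n) ℝ,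
      R'ᵀ * X * R' = (Rᵀ * X * R).submatrix ε ε := by
    intro X
    rw [hR', transpose_submatrix]
    have step1 : Rᵀ.submatrix ⇑ε id * X = (Rᵀ * X).submatrix ⇑ε id := by
      ext i j; simp [mul_apply]
    have step2 : (Rᵀ * X).submatrix ⇑ε id * R.submatrix id ⇑ε =
        ((Rᵀ * X) * R).submatrix ⇑ε ⇑ε := by
      ext i j; simp [mul_apply]
    rw [step1, step2]
  have key : M.det * s = -(s * s) * D.det := by
    have d1 : (R'ᵀ * M * R').det = -(s * s) * D.det := by
      rw [hsub M, det_submatrix_equiv_self, hdet1]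
    have d2 : (R'ᵀ * R').det = s := by
      have : R'ᵀ * R' = (Rᵀ * (1 : Matrix (Fin 1 ⊕ Fin n) (Fin 1 ⊕ Fin n) ℝ) * R).submatrix ε ε := by
        have := hsub 1
        rwa [Matrix.mul_one] at this
      rw [this, det_submatrix_equiv_self]
      rw [Matrix.mul_one]
      exact hdet2
    calc M.det * s = M.det * (R'ᵀ * R').det := by rw [d2]
      _ = M.det * (R'ᵀ.det * R'.det) := by rw [det_mul]
      _ = R'ᵀ.det * M.det * R'.det := by ring
      _ = (R'ᵀ * M * R').det := by rw [det_mul, det_mul]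
      _ = -(s * s) * D.det := d1
  have : M.det * s = (-(s * D.det)) * s := by rw [key]; ring
  have := mul_right_cancel₀ hs0 this
  exact this
end

section
/- Let n ≥ 1, let C be a symmetric positive definite n×n real matrix, let φ ∈ ℝⁿ be nonzero, and let B be an n×(n−1) real matrix with Bᵀ B = I_{n−1} and Bᵀ φ = 0 (so the columns of B form an orthonormal basis of the hyperplane φ⊥ = {x ∈ ℝⁿ : φᵀ x = 0}). Then (φᵀ C⁻¹ φ) · det(C) = (φᵀ φ) · det(Bᵀ C B). -/
open Matrix

theorem stmt_2 (n : ℕ) (hn : 1 ≤ n)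
    (C : Matrix (Fin n) (Fin n) ℝ) (hC : C.PosDef)
    (φ : Fin n → ℝ) (hφ : φ ≠ 0)
    (B : Matrix (Fin n) (Fin (n - 1)) ℝ)
    (hB_orth : Bᵀ * B = 1) (hB_perp : Bᵀ *ᵥ φ = 0) :
    (φ ⬝ᵥ (C⁻¹ *ᵥ φ)) * C.det = (φ ⬝ᵥ φ) * (Bᵀ * C * B).det := by
  classical
  have hmn : (n - 1) + 1 = n := by omega
  set c : ℝ := φ ⬝ᵥ φ with hc
  have hcpos : 0 < c := by
    have : c ≠ 0 := fun h => hφ (by simpa using (dotProduct_self_eq_zero (v := φ)).mp h)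
    have hnn : 0 ≤ c := by
      apply Finset.sum_nonneg; intro i _; exact mul_self_nonneg _
    exact lt_of_le_of_ne hnn (Ne.symm this)
  let e : (Fin (n - 1) ⊕ Fin 1) ≃ Fin n := finSumFinEquiv.trans (finCongr hmn)
  let P : Matrix (Fin n) (Fin 1) ℝ := replicateCol (Fin 1) φ
  let M : Matrix (Fin n) (Fin (n - 1) ⊕ Fin 1) ℝ := fromCols B P
  let N : Matrix (Fin (n - 1) ⊕ Fin 1) (Fin (n - 1) ⊕ Fin 1) ℝ := M.submatrix e id
  -- conjugation by N turns a reindexed matrix into a block matrix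
  have conj : ∀ X : Matrix (Fin n) (Fin n) ℝ,
      Nᵀ * X.submatrix e e * N =
        fromBlocks (Bᵀ * X * B) (Bᵀ * X * P) (Pᵀ * X * B) (Pᵀ * X * P) := by
    intro X
    have h1 : Nᵀ * X.submatrix e e * N = Mᵀ * X * M := by
      have ht : Nᵀ = Mᵀ.submatrix id ⇑e := by
        simp [N, transpose_submatrix]
      rw [ht, show (N : Matrix _ _ ℝ) = M.submatrix ⇑e id from rfl,
        submatrix_mul_equiv Mᵀ X id e ⇑e,
        submatrix_mul_equiv (Mᵀ * X) M id e id, submatrix_id_id]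
    rw [h1]
    have h2 : Mᵀ = fromRows Bᵀ Pᵀ := transpose_fromCols B P
    rw [h2, fromRows_mul, show (M : Matrix _ _ ℝ) = fromCols B P from rfl,
      fromRows_mul_fromCols]
  -- the Gram matrix of N
  have hPtP : Pᵀ * P = c • (1 : Matrix (Fin 1) (Fin 1) ℝ) := by
    ext i j
    rw [show Pᵀ = replicateRow (Fin 1) φ from transpose_replicateCol φ, replicateRow_mul_replicateCol_apply]
    rw [Subsingleton.elim i j, Matrix.smul_apply, one_apply_eq, smul_eq_mul, mul_one]
  have hBtP : Bᵀ * P = 0 := by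
    rw [show (P : Matrix _ _ ℝ) = replicateCol (Fin 1) φ from rfl, ← replicateCol_mulVec, hB_perp]
    ext i j; simp
  have hPtB : Pᵀ * B = 0 := by
    have := congrArg transpose hBtP
    rwa [transpose_mul, transpose_transpose, transpose_zero] at this
  have hNN : Nᵀ * N = fromBlocks 1 0 0 (c • (1 : Matrix (Fin 1) (Fin 1) ℝ)) := by
    have h := conj 1
    rw [submatrix_one_equiv, Matrix.mul_one, Matrix.mul_one, Matrix.mul_one] at h
    rw [h, hB_orth, hBtP, hPtB, hPtP]
  have hdetD : (fromBlocks (1 : Matrix (Fin (n-1)) (Fin (n-1)) ℝ) 0 0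
      (c • (1 : Matrix (Fin 1) (Fin 1) ℝ))).det = c := by
    rw [det_fromBlocks_zero₂₁, det_one, one_mul, det_fin_one]
    simp
  have hdetN2 : N.det * N.det = c := by
    have := congrArg det hNN
    rwa [det_mul, det_transpose, hdetD] at this
  -- D and its inverse
  set D : Matrix (Fin (n-1) ⊕ Fin 1) (Fin (n-1) ⊕ Fin 1) ℝ :=
    fromBlocks 1 0 0 (c • 1) with hD
  set Dinv : Matrix (Fin (n-1) ⊕ Fin 1) (Fin (n-1) ⊕ Fin 1) ℝ :=
    fromBlocks 1 0 0 (c⁻¹ • 1) with hDinv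
  have hDD : Dinv * D = 1 := by
    rw [hD, hDinv, fromBlocks_multiply]
    simp [smul_smul, inv_mul_cancel₀ hcpos.ne', mul_inv_cancel₀ hcpos.ne', ← fromBlocks_one]
  have hDD' : D * Dinv = 1 := by
    rw [hD, hDinv, fromBlocks_multiply]
    simp [smul_smul, inv_mul_cancel₀ hcpos.ne', mul_inv_cancel₀ hcpos.ne', ← fromBlocks_one]
  -- A = Bᵀ C B is positive definite
  have hA : (Bᵀ * C * B).PosDef := by
    rw [posDef_iff_dotProduct_mulVec]
    constructor
    · have h := isHermitian_conjTranspose_mul_mul B hC.1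
      have hBH : Bᴴ = Bᵀ := by ext i j; simp [conjTranspose_apply]
      rwa [hBH] at h
    · intro x hx
      have hBx : B *ᵥ x ≠ 0 := by
        intro h
        apply hx
        have : Bᵀ *ᵥ (B *ᵥ x) = 0 := by rw [h, mulVec_zero]
        rwa [mulVec_mulVec, hB_orth, one_mulVec] at this
      have := hC.dotProduct_mulVec_pos hBx
      rw [star_trivial] at this ⊢
      calc (0:ℝ) < (B *ᵥ x) ⬝ᵥ (C *ᵥ (B *ᵥ x)) := this
        _ = x ⬝ᵥ ((Bᵀ * C * B) *ᵥ x) := by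
            rw [← mulVec_mulVec, ← mulVec_mulVec, dotProduct_mulVec x Bᵀ,
              vecMul_transpose]
  haveI hAinv : Invertible (Bᵀ * C * B) := (Bᵀ * C * B).invertibleOfIsUnitDet hA.det_pos.ne'.isUnit
  -- the block decomposition of F = Nᵀ C' N
  have hF : Nᵀ * C.submatrix e e * N =
      fromBlocks (Bᵀ * C * B) (Bᵀ * C * P) (Pᵀ * C * B) (Pᵀ * C * P) := conj C
  have hFdet : (fromBlocks (Bᵀ * C * B) (Bᵀ * C * P) (Pᵀ * C * B) (Pᵀ * C * P)).det
      = c * C.det := by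
    rw [← hF, det_mul, det_mul, det_transpose, det_submatrix_equiv_self]
    linear_combination C.det * hdetN2
  -- Schur complement
  set s : Matrix (Fin 1) (Fin 1) ℝ :=
    Pᵀ * C * P - Pᵀ * C * B * ⅟(Bᵀ * C * B) * (Bᵀ * C * P) with hs
  have hdetSchur : (fromBlocks (Bᵀ * C * B) (Bᵀ * C * P) (Pᵀ * C * B) (Pᵀ * C * P)).det
      = (Bᵀ * C * B).det * s.det := det_fromBlocks₁₁ _ _ _ _
  have hsdet : s.det = s 0 0 := det_fin_one s
  have hs00 : (Bᵀ * C * B).det * s 0 0 = c * C.det := by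
    rw [← hsdet, ← hdetSchur, hFdet]
  have hsne : s 0 0 ≠ 0 := by
    intro h
    have : c * C.det ≠ 0 := mul_ne_zero hcpos.ne' hC.det_pos.ne'
    rw [← hs00, h, mul_zero] at this
    exact this rfl
  haveI hsinv : Invertible s := s.invertibleOfIsUnitDet (by rw [hsdet]; exact hsne.isUnit)
  haveI hFinvertible : Invertible
      (fromBlocks (Bᵀ * C * B) (Bᵀ * C * P) (Pᵀ * C * B) (Pᵀ * C * P)) :=
    Matrix.invertibleOfIsUnitDet _ (by
      rw [hFdet]; exact (mul_ne_zero hcpos.ne' hC.det_pos.ne').isUnit)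
  -- inverse of F via Schur complement
  have hFinv1 : (fromBlocks (Bᵀ * C * B) (Bᵀ * C * P) (Pᵀ * C * B) (Pᵀ * C * P))⁻¹
      = fromBlocks
        (⅟(Bᵀ * C * B) + ⅟(Bᵀ * C * B) * (Bᵀ * C * P) * ⅟s * (Pᵀ * C * B) * ⅟(Bᵀ * C * B))
        (-(⅟(Bᵀ * C * B) * (Bᵀ * C * P) * ⅟s))
        (-(⅟s * (Pᵀ * C * B) * ⅟(Bᵀ * C * B))) (⅟s) := by
    rw [← invOf_eq_nonsing_inv]
    exact invOf_fromBlocks₁₁_eq _ _ _ _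
  -- inverse of F via N
  have hNinv : N⁻¹ = Dinv * Nᵀ := by
    apply inv_eq_left_inv
    rw [Matrix.mul_assoc, hNN, hDD]
  have hNtinv : (Nᵀ)⁻¹ = N * Dinv := by
    apply inv_eq_right_inv
    rw [← Matrix.mul_assoc, hNN, hDD']
  have hFinv2 : (Nᵀ * C.submatrix e e * N)⁻¹
      = Dinv * (Nᵀ * (C⁻¹).submatrix e e * N) * Dinv := by
    rw [Matrix.mul_inv_rev, Matrix.mul_inv_rev, hNinv, hNtinv,
      inv_submatrix_equiv]
    simp only [Matrix.mul_assoc]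
  have hG : Nᵀ * (C⁻¹).submatrix e e * N =
      fromBlocks (Bᵀ * C⁻¹ * B) (Bᵀ * C⁻¹ * P) (Pᵀ * C⁻¹ * B) (Pᵀ * C⁻¹ * P) := conj C⁻¹
  set g : ℝ := φ ⬝ᵥ (C⁻¹ *ᵥ φ) with hg
  have hd' : (Pᵀ * C⁻¹ * P) 0 0 = g := by
    rw [show Pᵀ = replicateRow (Fin 1) φ from transpose_replicateCol φ, ← replicateRow_vecMul, replicateRow_mul_replicateCol_apply]
    rw [hg, dotProduct_mulVec]
  -- equate the (2,2) entries of the two expressions for F⁻¹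
  have hentry : (⅟s) 0 0 = c⁻¹ * (c⁻¹ * g) := by
    have h := hFinv1
    rw [← hF, hFinv2, hG] at h
    have h2 := congrFun (congrFun h.symm (Sum.inr 0)) (Sum.inr 0)
    rw [fromBlocks_apply₂₂] at h2
    rw [hDinv, fromBlocks_multiply, fromBlocks_multiply] at h2
    rw [fromBlocks_apply₂₂] at h2
    simp only [Matrix.zero_mul, Matrix.mul_zero, add_zero, zero_add,
      Matrix.smul_mul, Matrix.mul_smul, Matrix.one_mul, Matrix.mul_one] at h2
    rw [h2, Matrix.smul_apply, smul_eq_mul, Matrix.smul_apply, smul_eq_mul, hd']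
  have hmulinv : s 0 0 * (⅟s) 0 0 = 1 := by
    have h := congrFun (congrFun (mul_invOf_self s) 0) 0
    rwa [mul_apply, Fin.sum_univ_one, one_apply_eq] at h
  -- final algebra
  have e2 : s 0 0 * g = c * c := by
    rw [hentry] at hmulinv
    field_simp at hmulinv
    linarith [hmulinv]
  have key : c * (g * C.det) = c * (c * (Bᵀ * C * B).det) := by
    linear_combination (Bᵀ * C * B).det * e2 - g * hs00
  exact mul_left_cancel₀ hcpos.ne' key
end

section
/- Let n ≥ 1, let φ ∈ ℂⁿ, let C be an invertible n×n complex matrix, and let z ∈ ℂ be nonzero. Then det [[0, φᵀ],[φ, z·(φ φᵀ + C)]] = −z^{n−1} · (φᵀ C⁻¹ φ) · det(C), where φ φᵀ is the rank-one n×n matrix with entries φᵢ φⱼ. -/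
open Matrix

theorem stmt_3 (n : ℕ) (hn : 1 ≤ n) (φ : Fin n → ℂ)
    (C : Matrix (Fin n) (Fin n) ℂ) (hinv : IsUnit C.det)
    (z : ℂ) (hz : z ≠ 0) :
    (Matrix.fromBlocks (0 : Matrix (Fin 1) (Fin 1) ℂ)
        (Matrix.replicateRow (Fin 1) φ) (Matrix.replicateCol (Fin 1) φ)
        (z • (Matrix.vecMulVec φ φ + C))).det
      = -(z ^ (n - 1) * (φ ⬝ᵥ (C⁻¹ *ᵥ φ)) * C.det) := by
  have hzn : z ^ n = z ^ (n - 1) * z := by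
    rw [← pow_succ, Nat.sub_add_cancel hn]
  set D : Matrix (Fin n) (Fin n) ℂ := z • (Matrix.vecMulVec φ φ + C) with hD
  set M : Matrix (Fin 1 ⊕ Fin n) (Fin 1 ⊕ Fin n) ℂ :=
    Matrix.fromBlocks 0 (Matrix.replicateRow (Fin 1) φ) (Matrix.replicateCol (Fin 1) φ) D with hM
  set N : Matrix (Fin 1 ⊕ Fin n) (Fin 1 ⊕ Fin n) ℂ :=
    Matrix.fromBlocks (z⁻¹ • (1 : Matrix (Fin 1) (Fin 1) ℂ)) (Matrix.replicateRow (Fin 1) φ)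
      (Matrix.replicateCol (Fin 1) φ) D with hN
  -- Schur complement computation for N
  haveI : Invertible (z⁻¹ • (1 : Matrix (Fin 1) (Fin 1) ℂ)) :=
    ⟨z • (1 : Matrix (Fin 1) (Fin 1) ℂ),
      by rw [smul_mul_smul_comm, one_mul, mul_inv_cancel₀ hz, one_smul],
      by rw [smul_mul_smul_comm, one_mul, inv_mul_cancel₀ hz, one_smul]⟩
  have hinvOf : ⅟ (z⁻¹ • (1 : Matrix (Fin 1) (Fin 1) ℂ)) = z • 1 :=
    invOf_eq_right_inv
      (by rw [smul_mul_smul_comm, one_mul, inv_mul_cancel₀ hz, one_smul])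
  have hNdet : N.det = z ^ (n - 1) * C.det := by
    rw [hN, Matrix.det_fromBlocks₁₁, hinvOf]
    have h1 : Matrix.replicateCol (Fin 1) φ * (z • (1 : Matrix (Fin 1) (Fin 1) ℂ)) *
        Matrix.replicateRow (Fin 1) φ = z • Matrix.vecMulVec φ φ := by
      rw [Matrix.mul_smul, Matrix.mul_one, Matrix.smul_mul]
      erw [← Matrix.vecMulVec_eq (Fin 1)]
    rw [h1, hD]
    have h2 : z • (Matrix.vecMulVec φ φ + C) - z • Matrix.vecMulVec φ φ = z • C := by
      rw [smul_add]; abel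
    rw [h2, Matrix.det_smul, Matrix.det_smul, Matrix.det_one, Fintype.card_fin,
      Fintype.card_fin, pow_one, mul_one, hzn]
    field_simp
  -- E : the matrix with first row replaced by the standard basis vector
  set E : Matrix (Fin 1 ⊕ Fin n) (Fin 1 ⊕ Fin n) ℂ :=
    Matrix.fromBlocks 1 0 (Matrix.replicateCol (Fin 1) φ) D with hE
  have hEdet : E.det = z ^ n * ((1 + φ ⬝ᵥ C⁻¹ *ᵥ φ) * C.det) := by
    rw [hE, Matrix.det_fromBlocks_zero₁₂, Matrix.det_one, one_mul, hD, Matrix.det_smul,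
      Fintype.card_fin]
    congr 1
    have h3 : Matrix.vecMulVec φ φ + C
        = C * (1 + Matrix.replicateCol (Fin 1) (C⁻¹ *ᵥ φ) * Matrix.replicateRow (Fin 1) φ) := by
      rw [Matrix.mul_add, Matrix.mul_one, ← Matrix.mul_assoc, ← Matrix.replicateCol_mulVec,
        Matrix.mulVec_mulVec, Matrix.mul_nonsing_inv C hinv, Matrix.one_mulVec]
      erw [← Matrix.vecMulVec_eq (Fin 1)]
      abel
    rw [h3, Matrix.det_mul]
    erw [Matrix.det_one_add_replicateCol_mul_replicateRow]
    rw [mul_comm]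
  -- Row linearity: N.det = M.det + z⁻¹ * E.det
  have hrowM : M (Sum.inl 0) = Sum.elim (fun _ => (0 : ℂ)) φ := by
    funext j; cases j with
    | inl j => simp [hM]
    | inr j => simp [hM]
  have hrowsplit : (Sum.elim (fun _ => z⁻¹) φ : Fin 1 ⊕ Fin n → ℂ)
      = Sum.elim (fun _ => (0 : ℂ)) φ + z⁻¹ • (Sum.elim (fun _ => (1 : ℂ)) (fun _ => (0 : ℂ)) : Fin 1 ⊕ Fin n → ℂ) := by
    funext j; cases j with
    | inl j =>
      have : j = 0 := Subsingleton.elim _ _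
      subst this
      simp
    | inr j => simp
  have hNM : N = Matrix.updateRow M (Sum.inl 0) (Sum.elim (fun _ => z⁻¹) φ) := by
    ext i j
    rcases i with i | i
    · have : i = 0 := Subsingleton.elim _ _
      subst this
      cases j with
      | inl j =>
        have : j = 0 := Subsingleton.elim _ _
        subst this
        simp [hN, Matrix.one_apply]
      | inr j => simp [hN]
    · have hne : (Sum.inr i : Fin 1 ⊕ Fin n) ≠ Sum.inl 0 := Sum.inr_ne_inl
      rw [Matrix.updateRow_ne hne]
      cases j with
      | inl j => simp [hN, hM]
      | inr j => simp [hN, hM]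
  have hEM : E = Matrix.updateRow M (Sum.inl 0) (Sum.elim (fun _ => (1 : ℂ)) (fun _ => (0 : ℂ))) := by
    ext i j
    rcases i with i | i
    · have : i = 0 := Subsingleton.elim _ _
      subst this
      cases j with
      | inl j =>
        have : j = 0 := Subsingleton.elim _ _
        subst this
        simp [hE, Matrix.one_apply]
      | inr j => simp [hE]
    · have hne : (Sum.inr i : Fin 1 ⊕ Fin n) ≠ Sum.inl 0 := Sum.inr_ne_inl
      rw [Matrix.updateRow_ne hne]
      cases j with
      | inl j => simp [hE, hM]
      | inr j => simp [hE, hM]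
  have hMrow : Matrix.updateRow M (Sum.inl 0) (Sum.elim (fun _ => (0 : ℂ)) φ) = M := by
    rw [← hrowM, Matrix.updateRow_eq_self]
  have hkey : N.det = M.det + z⁻¹ * E.det := by
    rw [hNM, hrowsplit, Matrix.det_updateRow_add, Matrix.det_updateRow_smul, hMrow, ← hEM]
  have hMdet : M.det = N.det - z⁻¹ * E.det := by rw [hkey]; ring
  rw [hMdet, hNdet, hEdet, hzn]
  field_simp
  ring
end

section
/- Let p, q ≥ 1 be natural numbers and set n = p + q. Then the sequence k ↦ k^{−1/2} · ((k·n + 1)! / ((k·p)! · (k·q)!)) · (p/n)^{k·p} · (q/n)^{k·q} converges, as k → ∞, to n^{3/2} / √(2·π·p·q). -/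
open Filter

lemma stmt_11_key_eq (p q n k : ℕ) (hp : 1 ≤ p) (hq : 1 ≤ q) (hn : n = p + q) (hk : 1 ≤ k) :
    (k : ℝ) ^ (-(1 / 2 : ℝ)) *
        ((Nat.factorial (k * n + 1) : ℝ) /
          ((Nat.factorial (k * p) : ℝ) * (Nat.factorial (k * q) : ℝ))) *
        ((p : ℝ) / (n : ℝ)) ^ (k * p) * ((q : ℝ) / (n : ℝ)) ^ (k * q)
      = (((k:ℝ)*n+1)/k) * Real.sqrt ((n:ℝ)/(2*p*q)) *
        (Stirling.stirlingSeq (k*n) / (Stirling.stirlingSeq (k*p) * Stirling.stirlingSeq (k*q))) := by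
  have hp0 : (0:ℝ) < p := by exact_mod_cast hp
  have hq0 : (0:ℝ) < q := by exact_mod_cast hq
  have hk0 : (0:ℝ) < k := by exact_mod_cast hk
  have hn1 : 1 ≤ n := hn ▸ le_add_right hp
  have hn0 : (0:ℝ) < n := by exact_mod_cast hn1
  have spos : ∀ m : ℕ, 1 ≤ m → 0 < Stirling.stirlingSeq m := by
    intro m hm
    have h : (0:ℝ) < m := by exact_mod_cast hm
    rw [Stirling.stirlingSeq]
    positivity
  have hfac : ∀ m : ℕ, 1 ≤ m →
      ((Nat.factorial m : ℝ)) = Stirling.stirlingSeq m * (Real.sqrt (2*m) * ((m:ℝ)/Real.exp 1)^m) := by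
    intro m hm
    have h : (0:ℝ) < m := by exact_mod_cast hm
    rw [Stirling.stirlingSeq, div_mul_cancel₀]
    positivity
  have hrpow : (k:ℝ) ^ (-(1/2:ℝ)) = (Real.sqrt k)⁻¹ := by
    rw [Real.sqrt_eq_rpow, ← Real.rpow_neg (Nat.cast_nonneg k)]
  have hkn1 : 1 ≤ k*n := Nat.one_le_iff_ne_zero.mpr (Nat.mul_ne_zero (by omega) (by omega))
  have hkp1 : 1 ≤ k*p := Nat.one_le_iff_ne_zero.mpr (Nat.mul_ne_zero (by omega) (by omega))
  have hkq1 : 1 ≤ k*q := Nat.one_le_iff_ne_zero.mpr (Nat.mul_ne_zero (by omega) (by omega))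
  have s1 := spos _ hkn1
  have s2 := spos _ hkp1
  have s3 := spos _ hkq1
  rw [Nat.factorial_succ, Nat.cast_mul, hfac _ hkn1, hfac _ hkp1, hfac _ hkq1, hrpow]
  push_cast
  set a := Stirling.stirlingSeq (k*n)
  set b := Stirling.stirlingSeq (k*p)
  set c := Stirling.stirlingSeq (k*q)
  set A := Real.sqrt (2*((k:ℝ)*n)) with hA
  set B := Real.sqrt (2*((k:ℝ)*p)) with hB
  set C := Real.sqrt (2*((k:ℝ)*q)) with hC
  have hA0 : 0 < A := Real.sqrt_pos.mpr (by positivity)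
  have hB0 : 0 < B := Real.sqrt_pos.mpr (by positivity)
  have hC0 : 0 < C := Real.sqrt_pos.mpr (by positivity)
  have hsk : 0 < Real.sqrt k := Real.sqrt_pos.mpr hk0
  have hQ : (0:ℝ) < (((k:ℝ)*p)/Real.exp 1)^(k*p) := by positivity
  have hR : (0:ℝ) < (((k:ℝ)*q)/Real.exp 1)^(k*q) := by positivity
  have e1 : ((k:ℝ)*p/Real.exp 1) = (((k:ℝ)*n)/Real.exp 1) * ((p:ℝ)/n) := by
    field_simp
  have e2 : ((k:ℝ)*q/Real.exp 1) = (((k:ℝ)*n)/Real.exp 1) * ((q:ℝ)/n) := by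
    field_simp
  have hkn : k*n = k*p + k*q := by rw [hn]; ring
  have hpow : (((k:ℝ)*n)/Real.exp 1)^(k*n) * ((p:ℝ)/n)^(k*p) * ((q:ℝ)/n)^(k*q)
      = (((k:ℝ)*p)/Real.exp 1)^(k*p) * (((k:ℝ)*q)/Real.exp 1)^(k*q) := by
    rw [e1, e2, hkn, pow_add, mul_pow, mul_pow]; ring
  have hsqrt : (Real.sqrt k)⁻¹ * A / (B * C) = (1/(k:ℝ)) * Real.sqrt ((n:ℝ)/(2*p*q)) := by
    rw [hA, hB, hC, ← Real.sqrt_inv, ← Real.sqrt_mul (by positivity), ← Real.sqrt_mul (by positivity),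
      ← Real.sqrt_div (by positivity)]
    rw [show (k:ℝ)⁻¹ * (2*((k:ℝ)*n)) / (2*((k:ℝ)*p) * (2*((k:ℝ)*q))) = (1/(k:ℝ))^2 * ((n:ℝ)/(2*p*q)) by field_simp]
    rw [Real.sqrt_mul (by positivity), Real.sqrt_sq (by positivity)]
  have main : (Real.sqrt k)⁻¹ *
        (((k:ℝ)*n+1) * (a * (A * (((k:ℝ)*n)/Real.exp 1)^(k*n))) /
          ((b * (B * (((k:ℝ)*p)/Real.exp 1)^(k*p))) * (c * (C * (((k:ℝ)*q)/Real.exp 1)^(k*q))))) *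
        ((p:ℝ)/n)^(k*p) * ((q:ℝ)/n)^(k*q)
      = (((k:ℝ)*n+1) * (a/(b*c))) * ((Real.sqrt k)⁻¹ * A/(B*C)) *
        ((((k:ℝ)*n)/Real.exp 1)^(k*n) * ((p:ℝ)/n)^(k*p) * ((q:ℝ)/n)^(k*q) /
          ((((k:ℝ)*p)/Real.exp 1)^(k*p) * (((k:ℝ)*q)/Real.exp 1)^(k*q))) := by
    have hb := s2.ne'
    have hc := s3.ne'
    have hB' := hB0.ne'
    have hC' := hC0.ne'
    have hQ' := hQ.ne'
    have hR' := hR.ne'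
    have hsk' := hsk.ne'
    field_simp
  rw [main, hpow, div_self (by positivity), mul_one, hsqrt]
  ring

theorem stmt_11 (p q : ℕ) (hp : 1 ≤ p) (hq : 1 ≤ q) (n : ℕ) (hn : n = p + q) :
    Tendsto
      (fun k : ℕ => (k : ℝ) ^ (-(1 / 2 : ℝ)) *
        ((Nat.factorial (k * n + 1) : ℝ) /
          ((Nat.factorial (k * p) : ℝ) * (Nat.factorial (k * q) : ℝ))) *
        ((p : ℝ) / (n : ℝ)) ^ (k * p) * ((q : ℝ) / (n : ℝ)) ^ (k * q))
      atTop
      (nhds ((n : ℝ) ^ ((3 : ℝ) / 2) / Real.sqrt (2 * Real.pi * (p : ℝ) * (q : ℝ)))) := by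
  have hp0 : (0:ℝ) < p := by exact_mod_cast hp
  have hq0 : (0:ℝ) < q := by exact_mod_cast hq
  have hn1 : 1 ≤ n := hn ▸ le_add_right hp
  have hn0 : (0:ℝ) < n := by exact_mod_cast hn1
  have hπ : 0 < Real.sqrt Real.pi := Real.sqrt_pos.mpr Real.pi_pos
  have hcomp : ∀ m : ℕ, 1 ≤ m →
      Tendsto (fun k : ℕ => Stirling.stirlingSeq (k*m)) atTop (nhds (Real.sqrt Real.pi)) := by
    intro m hm
    exact Stirling.tendsto_stirlingSeq_sqrt_pi.comp
      (tendsto_atTop_mono (fun k => Nat.le_mul_of_pos_right k hm) tendsto_id)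
  have h1 : Tendsto (fun k : ℕ => ((k:ℝ)*n+1)/k) atTop (nhds ((n:ℝ) + 0)) := by
    apply Tendsto.congr' ?_ ((tendsto_const_nhds (x := (n:ℝ))).add tendsto_one_div_atTop_nhds_zero_nat)
    filter_upwards [eventually_ge_atTop 1] with k hk
    have hk0 : (k:ℝ) ≠ 0 := by positivity
    field_simp
  have h2 : Tendsto (fun k : ℕ => Stirling.stirlingSeq (k*n) /
      (Stirling.stirlingSeq (k*p) * Stirling.stirlingSeq (k*q))) atTop
      (nhds (Real.sqrt Real.pi / (Real.sqrt Real.pi * Real.sqrt Real.pi))) :=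
    (hcomp n hn1).div ((hcomp p hp).mul (hcomp q hq)) (by positivity)
  have hlim := (h1.mul_const (Real.sqrt ((n:ℝ)/(2*p*q)))).mul h2
  apply Tendsto.congr' ?_ ?_
  · exact fun k => (((k:ℝ)*n+1)/k) * Real.sqrt ((n:ℝ)/(2*p*q)) *
      (Stirling.stirlingSeq (k*n) / (Stirling.stirlingSeq (k*p) * Stirling.stirlingSeq (k*q)))
  · filter_upwards [eventually_ge_atTop 1] with k hk
    exact (stmt_11_key_eq p q n k hp hq hn hk).symm
  · convert hlim using 2
    rw [add_zero]
    have key : ((n:ℝ)) ^ ((3:ℝ)/2) = (n:ℝ) * Real.sqrt n := by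
      rw [show ((3:ℝ)/2) = 1 + 1/2 by norm_num, Real.rpow_add hn0, Real.rpow_one,
        Real.sqrt_eq_rpow]
    rw [key]
    rw [show (2 * Real.pi * (p:ℝ) * q) = Real.pi * (2*p*q) by ring,
      Real.sqrt_mul Real.pi_pos.le, Real.sqrt_div hn0.le]
    have h2pq : 0 < Real.sqrt (2*(p:ℝ)*q) := Real.sqrt_pos.mpr (by positivity)
    rw [show (2*(p:ℝ)*q) = 2*((p:ℝ)*q) by ring] at h2pq ⊢
    field_simp
end

section
/- Let p, q ≥ 1 be natural numbers, set n = p + q, and let x, y be positive real numbers with x + y = 1 and (x, y) ≠ (p/n, q/n). Then for every natural number N, the sequence k ↦ k^N · ((k·n + 1)! / ((k·p)! · (k·q)!)) · x^{k·p} · y^{k·q} tends to 0 as k → ∞. -/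
open Filter

set_option maxHeartbeats 1000000

private lemma choose_term_le (m j : ℕ) (hj : j ≤ m) (u v : ℝ) (hu : 0 ≤ u) (hv : 0 ≤ v) :
    (m.choose j : ℝ) * u ^ j * v ^ (m - j) ≤ (u + v) ^ m := by
  rw [add_pow]
  have h := Finset.single_le_sum (f := fun i => u ^ i * v ^ (m - i) * (m.choose i : ℝ))
    (fun i _ => by positivity) (Finset.mem_range.2 (Nat.lt_succ_of_le hj))
  calc (m.choose j : ℝ) * u ^ j * v ^ (m - j)
      = u ^ j * v ^ (m - j) * (m.choose j : ℝ) := by ring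
    _ ≤ _ := h

theorem stmt_12 (p q : ℕ) (hp : 1 ≤ p) (hq : 1 ≤ q) (n : ℕ) (hn : n = p + q)
    (x y : ℝ) (hx : 0 < x) (hy : 0 < y) (hxy : x + y = 1)
    (hne : (x, y) ≠ ((p : ℝ) / (n : ℝ), (q : ℝ) / (n : ℝ))) :
    ∀ N : ℕ,
      Tendsto
        (fun k : ℕ => (k : ℝ) ^ N *
          ((Nat.factorial (k * n + 1) : ℝ) /
            ((Nat.factorial (k * p) : ℝ) * (Nat.factorial (k * q) : ℝ))) *
          x ^ (k * p) * y ^ (k * q))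
        atTop (nhds 0) := by
  intro N
  have hp' : (0:ℝ) < p := by exact_mod_cast hp
  have hq' : (0:ℝ) < q := by exact_mod_cast hq
  have hn0 : 0 < n := by omega
  have hn' : (0:ℝ) < n := by exact_mod_cast hn0
  have hnpq : (n:ℝ) = p + q := by rw [hn]; push_cast; ring
  set a : ℝ := n * x / p with ha_def
  set b : ℝ := n * y / q with hb_def
  have ha : 0 < a := by positivity
  have hb : 0 < b := by positivity
  have hxa : x = (p/n) * a := by rw [ha_def]; field_simp
  have hyb : y = (q/n) * b := by rw [hb_def]; field_simp
  have hab : (p/n) * a + (q/n) * b = 1 := by rw [← hxa, ← hyb]; exact hxy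
  have hne' : a ≠ b := by
    intro h
    apply hne
    have h1 : (n:ℝ) * x * q = n * y * p := by
      rw [ha_def, hb_def] at h
      field_simp at h
      rw [mul_assoc, h]; ring
    have h2 : x * q = y * p := by
      have := mul_left_cancel₀ (ne_of_gt hn') (by linarith [h1] : (n:ℝ) * (x*q) = n * (y*p))
      exact this
    have hx' : x = p / n := by
      have : x * n = p := by rw [hnpq]; nlinarith [h2, hxy]
      field_simp at this ⊢
      linarith [this]
    have hy' : y = q / n := by
      have : y * n = q := by rw [hnpq]; nlinarith [h2, hxy]
      field_simp at this ⊢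
      linarith [this]
    exact Prod.ext hx' hy'
  -- strict AM-GM
  have hlog : (p:ℝ)/n * Real.log a + (q:ℝ)/n * Real.log b < 0 := by
    have := strictConcaveOn_log_Ioi.2 (Set.mem_Ioi.2 ha) (Set.mem_Ioi.2 hb) hne'
      (by positivity : (0:ℝ) < p/n) (by positivity : (0:ℝ) < q/n)
      (by field_simp; rw [hnpq])
    simp only [smul_eq_mul] at this
    rw [hab, Real.log_one] at this
    exact this
  have hlog2 : (p:ℝ) * Real.log a + (q:ℝ) * Real.log b < 0 := by
    have h := hlog
    rw [div_mul_eq_mul_div, div_mul_eq_mul_div, ← add_div] at h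
    rcases div_neg_iff.mp h with ⟨_, h2⟩ | ⟨h1, _⟩
    · linarith
    · exact h1
  set r : ℝ := a ^ p * b ^ q with hr_def
  have hr0 : 0 < r := by positivity
  have hr1 : r < 1 := by
    have : r = Real.exp ((p:ℝ) * Real.log a + (q:ℝ) * Real.log b) := by
      rw [Real.exp_add, Real.exp_nat_mul, Real.exp_nat_mul, Real.exp_log ha, Real.exp_log hb]
    rw [this]
    calc Real.exp _ < Real.exp 0 := Real.exp_lt_exp.2 hlog2
    _ = 1 := Real.exp_zero
  -- squeeze
  have key : ∀ k : ℕ, 1 ≤ k →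
      (k : ℝ) ^ N * ((Nat.factorial (k * n + 1) : ℝ) /
        ((Nat.factorial (k * p) : ℝ) * (Nat.factorial (k * q) : ℝ))) *
        x ^ (k * p) * y ^ (k * q) ≤ (n + 1 : ℝ) * ((k:ℝ) ^ (N+1) * r ^ k) := by
    intro k hk
    have hkn : k * n = k * p + k * q := by rw [hn, Nat.mul_add]
    have hle : k * p ≤ k * n := by omega
    have hsub : k * n - k * p = k * q := by omega
    have hcf : ((k*n).choose (k*p) : ℝ) * (k*p).factorial * (k*q).factorial
        = (k*n).factorial := by
      exact_mod_cast congrArg Nat.cast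
        (hsub ▸ Nat.choose_mul_factorial_mul_factorial hle)
    have hfacpos : (0:ℝ) < ((k*p).factorial : ℝ) * ((k*q).factorial : ℝ) := by positivity
    have hratio : ((Nat.factorial (k * n + 1) : ℝ) /
        ((Nat.factorial (k * p) : ℝ) * (Nat.factorial (k * q) : ℝ)))
        = (k*n+1 : ℝ) * ((k*n).choose (k*p) : ℝ) := by
      rw [Nat.factorial_succ]
      push_cast
      rw [div_eq_iff (ne_of_gt hfacpos)]
      push_cast at hcf
      linear_combination (-((k:ℝ)*n+1)) * hcf
    rw [hratio]
    -- choose bound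
    have hchoose : ((k*n).choose (k*p) : ℝ) * x ^ (k*p) * y ^ (k*q) ≤ r ^ k := by
      have h1 : ((k*n).choose (k*p) : ℝ) * (p/n) ^ (k*p) * (q/n) ^ (k*q) ≤ 1 := by
        have := choose_term_le (k*n) (k*p) hle (p/n) (q/n)
          (by positivity) (by positivity)
        rw [hsub] at this
        have h2 : (p/n : ℝ) + q/n = 1 := by field_simp; rw [hnpq]
        rw [h2, one_pow] at this
        exact this
      have hrk : r ^ k = a ^ (k*p) * b ^ (k*q) := by
        rw [hr_def, mul_pow, ← pow_mul, ← pow_mul, Nat.mul_comm p k, Nat.mul_comm q k]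
      calc ((k*n).choose (k*p) : ℝ) * x ^ (k*p) * y ^ (k*q)
          = (((k*n).choose (k*p) : ℝ) * (p/n) ^ (k*p) * (q/n) ^ (k*q))
            * (a ^ (k*p) * b ^ (k*q)) := by
            rw [hxa, hyb, mul_pow, mul_pow]; ring
        _ ≤ 1 * (a ^ (k*p) * b ^ (k*q)) := by
            apply mul_le_mul_of_nonneg_right h1 (by positivity)
        _ = r ^ k := by rw [one_mul, hrk]
    have hk1 : (1:ℝ) ≤ (k:ℝ) := by exact_mod_cast hk
    have hkn1 : (k*n + 1 : ℝ) ≤ (n+1 : ℝ) * k := by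
      nlinarith [hk1, hn']
    have hkN : (0:ℝ) ≤ (k:ℝ)^N := by positivity
    calc (k : ℝ) ^ N * ((k*n+1 : ℝ) * ((k*n).choose (k*p) : ℝ)) * x ^ (k*p) * y ^ (k*q)
        = (k:ℝ)^N * (k*n+1 : ℝ) * (((k*n).choose (k*p) : ℝ) * x ^ (k*p) * y ^ (k*q)) := by
          ring
      _ ≤ (k:ℝ)^N * ((n+1:ℝ) * k) * (r ^ k) := by
          apply mul_le_mul
          · apply mul_le_mul_of_nonneg_left hkn1 hkN
          · exact hchoose
          · positivity
          · positivity
      _ = (n + 1 : ℝ) * ((k:ℝ) ^ (N+1) * r ^ k) := by rw [pow_succ]; ring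
  apply squeeze_zero' (g := fun k : ℕ => (n + 1 : ℝ) * ((k:ℝ) ^ (N+1) * r ^ k))
  · filter_upwards with k
    positivity
  · filter_upwards [eventually_ge_atTop 1] with k hk
    exact key k hk
  · have := (tendsto_pow_const_mul_const_pow_of_lt_one (N+1) hr0.le hr1).const_mul (n+1 : ℝ)
    simpa using this
end

section
/- Let X be a compact topological space and f : X → ℝ a continuous function. If the image f(X) is preconnected and the fiber f⁻¹({c}) is preconnected for every c ∈ ℝ, then X is preconnected. -/
theorem stmt_13 (X : Type*) [TopologicalSpace X] [CompactSpace X]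
    (f : X → ℝ) (hf : Continuous f)
    (himg : IsPreconnected (Set.range f))
    (hfib : ∀ c : ℝ, IsPreconnected (f ⁻¹' {c})) :
    PreconnectedSpace X := by
  rcases isEmpty_or_nonempty X with hX | hX
  · exact ⟨by simp [Set.eq_empty_of_isEmpty (Set.univ : Set X), isPreconnected_empty]⟩
  -- restrict f to its range
  set g : X → Set.range f := fun x => ⟨f x, Set.mem_range_self x⟩ with hg
  have hgc : Continuous g := Continuous.subtype_mk hf _
  have hgsurj : Function.Surjective g := fun ⟨y, x, hx⟩ => ⟨x, Subtype.ext hx⟩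
  have hgcl : IsClosedMap g := fun s hs =>
    ((hs.isCompact.image hgc).isClosed)
  have hq : Topology.IsQuotientMap g := hgcl.isQuotientMap hgc hgsurj
  have hcl : ∀ T : Set (Set.range f), IsClosed T ↔ IsClosed (g ⁻¹' T) :=
    fun T => ⟨fun h => h.preimage hgc, fun h => hq.isClosed_preimage.mp h⟩
  have hfibers : ∀ t : Set.range f, IsConnected (g ⁻¹' {t}) := by
    rintro ⟨c, x, hx⟩
    have : g ⁻¹' {⟨c, x, hx⟩} = f ⁻¹' {c} := by
      ext y; simp [hg, Subtype.ext_iff]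
    rw [this]
    exact ⟨⟨x, hx⟩, hfib c⟩
  have : PreconnectedSpace (Set.range f) :=
    Subtype.preconnectedSpace himg
  obtain ⟨x⟩ := hX
  have h := preimage_connectedComponent_connected hfibers hq.isCoinducing (g x)
  rw [PreconnectedSpace.connectedComponent_eq_univ, Set.preimage_univ] at h
  exact ⟨h.2⟩
end
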